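/- The equation (Ψc4) holds: for all objects A₁, A₂, B₁, B₂ of C, the composite Ψ_{A₁,A₂;B₁⊗B₂} ∘ (1_{EA₁⊗B₁} ⊗ c_{EA₂,B₂}) equals Ψ_{A₁,A₂;B₁} ⊗ 1_{B₂}, where on each side the unique structural coherence isomorphisms of C (built from a, l, r and their inverses) are inserted between the displayed factors so that the composites are well-typed morphisms with common source a bracketing of EA₁ ⊗ B₁ ⊗ EA₂ ⊗ B₂ and common target (E(A₁⊗A₂) ⊗ B₁) ⊗ B₂ (in Lean this can be expressed with monoidal coherent composition ⊗≫). -/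

import Mathlib

open CategoryTheory MonoidalCategory

lemma symm_cancel_aux {C : Type*} [Category C] [MonoidalCategory C] [SymmetricCategory C]
    (W X Y Z : C) {T : C} (f : W ⊗ (X ⊗ (Y ⊗ Z)) ⟶ T) :
    W ◁ X ◁ (β_ Y Z).hom ≫ W ◁ X ◁ (β_ Z Y).hom ≫ f = f := by
  rw [← MonoidalCategory.whiskerLeft_comp_assoc, ← MonoidalCategory.whiskerLeft_comp,
    SymmetricCategory.symmetry]
  simp

set_option maxHeartbeats 1000000 in
/-- For a linear (symmetric lax monoidal) endofunctor `E` of a symmetric monoidal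
category, with `Ψ_{A₁,A₂;B} := (ψ_{A₁,A₂} ⊗ 1_B) ∘ a⁻¹ ∘ (1_{EA₁} ⊗ c_{B,EA₂}) ∘ a`,
the equation (Ψc4) holds (structural coherence isomorphisms inserted via `⊗≫`). -/
theorem Psic4 {C : Type*} [Category C] [MonoidalCategory C] [SymmetricCategory C]
    (E : C ⥤ C)
    (ψ : ∀ A B : C, E.obj A ⊗ E.obj B ⟶ E.obj (A ⊗ B))
    (ψ₀ : 𝟙_ C ⟶ E.obj (𝟙_ C))
    (ψ_nat : ∀ {A A' B B' : C} (f : A ⟶ A') (g : B ⟶ B'),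
      (E.map f ⊗ₘ E.map g) ≫ ψ A' B' = ψ A B ≫ E.map (f ⊗ₘ g))
    (ψa : ∀ A B C' : C,
      (ψ A B ⊗ₘ 𝟙 (E.obj C')) ≫ ψ (A ⊗ B) C' ≫ E.map (α_ A B C').hom
        = (α_ (E.obj A) (E.obj B) (E.obj C')).hom ≫ (𝟙 (E.obj A) ⊗ₘ ψ B C') ≫ ψ A (B ⊗ C'))
    (ψl : ∀ A : C,
      (ψ₀ ⊗ₘ 𝟙 (E.obj A)) ≫ ψ (𝟙_ C) A ≫ E.map (λ_ A).hom = (λ_ (E.obj A)).hom)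
    (ψr : ∀ A : C,
      (𝟙 (E.obj A) ⊗ₘ ψ₀) ≫ ψ A (𝟙_ C) ≫ E.map (ρ_ A).hom = (ρ_ (E.obj A)).hom)
    (ψc : ∀ A B : C,
      ψ A B ≫ E.map (β_ A B).hom = (β_ (E.obj A) (E.obj B)).hom ≫ ψ B A)
    (Ψ : ∀ A₁ A₂ B : C, (E.obj A₁ ⊗ B) ⊗ E.obj A₂ ⟶ E.obj (A₁ ⊗ A₂) ⊗ B)
    (hΨ : ∀ A₁ A₂ B : C,
      Ψ A₁ A₂ B = (α_ (E.obj A₁) B (E.obj A₂)).hom ≫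
        (𝟙 (E.obj A₁) ⊗ₘ (β_ B (E.obj A₂)).hom) ≫
        (α_ (E.obj A₁) (E.obj A₂) B).inv ≫ (ψ A₁ A₂ ⊗ₘ 𝟙 B)) :
    ∀ A₁ A₂ B₁ B₂ : C,
      (𝟙 (E.obj A₁ ⊗ (B₁ ⊗ (E.obj A₂ ⊗ B₂))) ⊗≫
        (𝟙 (E.obj A₁ ⊗ B₁) ⊗ₘ (β_ (E.obj A₂) B₂).hom) ⊗≫
        Ψ A₁ A₂ (B₁ ⊗ B₂) ⊗≫
        𝟙 ((E.obj (A₁ ⊗ A₂) ⊗ B₁) ⊗ B₂))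
      = (𝟙 (E.obj A₁ ⊗ (B₁ ⊗ (E.obj A₂ ⊗ B₂))) ⊗≫
        (Ψ A₁ A₂ B₁ ⊗ₘ 𝟙 B₂) ⊗≫
        𝟙 ((E.obj (A₁ ⊗ A₂) ⊗ B₁) ⊗ B₂)) := by
  intro A₁ A₂ B₁ B₂
  simp only [hΨ]
  simp [monoidalComp, MonoidalCategory.tensorHom_def, symm_cancel_aux]
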